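/- Let λ be a partition with d distinct nonzero part sizes u_1 > ⋯ > u_d, let v_i be the multiplicity of u_i in λ and h_i = u_i − u_{i+1} (with u_{d+1}=0), and set x_i = h_1+⋯+h_i, y_i = v_1+⋯+v_i, x_0 = y_0 = 0. For 0 ≤ s ≤ d, let λ^{(+s)} be the partition obtained from λ by adding one cell at the end of row y_s + 1 (so U(λ) = {λ^{(+0)},…,λ^{(+d)}}). Then for each 0 ≤ s ≤ d, in ℚ(q,t): t^{y_s} · α_{λ^{(+s)}/λ}(q,t) = ∏_{i=1}^{d} (q^{x_s}t^{y_s} − q^{x_{i−1}}t^{y_i}) / ∏_{0 ≤ i ≤ d, i ≠ s} (q^{x_s}t^{y_s} − q^{x_i}t^{y_i}). -/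

import Mathlib

open Finset

noncomputable section

/-- The field `ℚ(q,t)` of rational functions in two variables over `ℚ`. -/
abbrev K : Type := FractionRing (MvPolynomial (Fin 2) ℚ)

def q : K := algebraMap (MvPolynomial (Fin 2) ℚ) K (MvPolynomial.X 0)
def t : K := algebraMap (MvPolynomial (Fin 2) ℚ) K (MvPolynomial.X 1)

/-- Arm-length of the cell `c = (row, col)` of `κ` (cells are 0-indexed, Mathlib convention). -/
def arm (κ : YoungDiagram) (c : ℕ × ℕ) : ℕ := κ.rowLen c.1 - c.2 - 1

/-- Leg-length of the cell `c = (row, col)` of `κ`. -/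
def leg (κ : YoungDiagram) (c : ℕ × ℕ) : ℕ := κ.colLen c.2 - c.1 - 1

/-- Hook-length of the cell `c` of `κ`. -/
def hook (κ : YoungDiagram) (c : ℕ × ℕ) : ℕ := arm κ c + leg κ c + 1

/-- `Covers μ λ` means `μ ⋖ λ` in Young's lattice. -/
def Covers (μ l : YoungDiagram) : Prop :=
  μ.cells ⊆ l.cells ∧ l.cells.card = μ.cells.card + 1

open scoped Classical in
/-- For `μ ⋖ λ`, the set `R_{λ/μ}` of cells of `μ` in the same row as the unique cell of `λ/μ`. -/
def Rset (μ l : YoungDiagram) : Finset (ℕ × ℕ) :=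
  μ.cells.filter fun c => ∃ d ∈ l.cells \ μ.cells, c.1 = d.1

open scoped Classical in
/-- For `μ ⋖ λ`, the set `C_{λ/μ}` of cells of `μ` in the same column as the unique cell of `λ/μ`. -/
def Cset (μ l : YoungDiagram) : Finset (ℕ × ℕ) :=
  μ.cells.filter fun c => ∃ d ∈ l.cells \ μ.cells, c.2 = d.2

/-- `[i,j] = 1 - q^i t^j`. -/
def brk (i j : ℕ) : K := 1 - q ^ i * t ^ j

/-- `b_κ(c) = (1 - q^{a} t^{ℓ+1})/(1 - q^{a+1} t^{ℓ})`. -/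
def bcell (κ : YoungDiagram) (c : ℕ × ℕ) : K :=
  brk (arm κ c) (leg κ c + 1) / brk (arm κ c + 1) (leg κ c)

/-- `ψ_{λ/μ}(q,t)` for `μ ⋖ λ`. -/
def ψqt (μ l : YoungDiagram) : K := ∏ c ∈ Rset μ l, bcell μ c / bcell l c

/-- `φ_{λ/μ}(q,t)` for `μ ⋖ λ`. -/
def φqt (μ l : YoungDiagram) : K :=
  ((1 - t) / (1 - q)) * ∏ c ∈ Cset μ l, bcell l c / bcell μ c

/-- `α_{ν/λ}(q,t)` for `λ ⋖ ν`. -/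
def alph (l ν : YoungDiagram) : K :=
  (∏ c ∈ Rset l ν, brk (arm l c) (leg l c + 1) / brk (arm ν c) (leg ν c + 1)) *
  (∏ c ∈ Cset l ν, brk (arm l c + 1) (leg l c) / brk (arm ν c + 1) (leg ν c))

/-- `ᾱ_{ν/λ}(q,t)` for `λ ⋖ ν`. -/
def alphBar (l ν : YoungDiagram) : K :=
  (∏ c ∈ Rset l ν, brk (arm l c + 1) (leg l c) / brk (arm ν c + 1) (leg ν c)) *
  (∏ c ∈ Cset l ν, brk (arm l c) (leg l c + 1) / brk (arm ν c) (leg ν c + 1))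

/-- `n(κ) = ∑_{c ∈ κ} ℓ_κ(c)` (as an integer). -/
def nstat (κ : YoungDiagram) : ℤ := ∑ c ∈ κ.cells, (leg κ c : ℤ)

/-- `n'(κ) = ∑_{c ∈ κ} a_κ(c)` (as an integer). -/
def nstat' (κ : YoungDiagram) : ℤ := ∑ c ∈ κ.cells, (arm κ c : ℤ)


lemma qt_pow_ne (a b c e : ℕ) (h : a ≠ c ∨ b ≠ e) : q ^ a * t ^ b ≠ q ^ c * t ^ e := by
  have hinj := IsFractionRing.injective (MvPolynomial (Fin 2) ℚ) K
  intro heq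
  have : (MvPolynomial.X 0 : MvPolynomial (Fin 2) ℚ) ^ a * MvPolynomial.X 1 ^ b
      = MvPolynomial.X 0 ^ c * MvPolynomial.X 1 ^ e := by
    apply hinj
    simpa [q, t, map_mul, map_pow] using heq
  rw [MvPolynomial.X_pow_eq_monomial, MvPolynomial.X_pow_eq_monomial,
    MvPolynomial.X_pow_eq_monomial, MvPolynomial.X_pow_eq_monomial,
    MvPolynomial.monomial_mul, MvPolynomial.monomial_mul, one_mul,
    MvPolynomial.monomial_eq_monomial_iff] at this
  rcases this with ⟨hf, -⟩ | ⟨h1, -⟩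
  · have h0 := congrArg (fun f => f 0) hf
    have h1 := congrArg (fun f => f 1) hf
    simp [Finsupp.single_apply] at h0 h1
    tauto
  · exact one_ne_zero h1

lemma qt_pow_ne_zero (a b : ℕ) : q ^ a * t ^ b ≠ 0 := by
  have hinj := IsFractionRing.injective (MvPolynomial (Fin 2) ℚ) K
  intro heq
  have : (MvPolynomial.X 0 : MvPolynomial (Fin 2) ℚ) ^ a * MvPolynomial.X 1 ^ b = 0 := by
    apply hinj
    simpa [q, t, map_mul, map_pow] using heq
  exact mul_ne_zero (pow_ne_zero _ (MvPolynomial.X_ne_zero _)) (pow_ne_zero _ (MvPolynomial.X_ne_zero _)) this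

lemma brk_ne_zero {i j : ℕ} (h : i ≠ 0 ∨ j ≠ 0) : brk i j ≠ 0 := by
  have := qt_pow_ne 0 0 i j (by tauto)
  rw [brk, sub_ne_zero]
  intro e
  exact this (by simpa using e)

lemma smono {f : ℕ → ℕ} {d : ℕ} (h : ∀ i < d, f i < f (i + 1)) :
    ∀ i j, i < j → j ≤ d → f i < f j := by
  intro i j hij hjd
  induction j with
  | zero => omega
  | succ n ih =>
    rcases Nat.lt_succ_iff_lt_or_eq.mp hij with h' | h'
    · exact lt_trans (ih h' (by omega)) (h n (by omega))
    · subst h'; exact h i (by omega)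

lemma prod_telescope (G : ℕ → K) (a b : ℕ) (hab : a ≤ b)
    (h0 : ∀ j, a ≤ j → j ≤ b → G j ≠ 0) :
    ∏ j ∈ Finset.Ico a b, G (j + 1) / G j = G b / G a := by
  induction b, hab using Nat.le_induction with
  | base => simp [div_self (h0 a le_rfl le_rfl)]
  | succ n hn ih =>
    rw [Finset.prod_Ico_succ_top hn, ih (fun j hj hj' => h0 j hj (by omega))]
    have h1 : G a ≠ 0 := h0 a le_rfl (by omega)
    have h2 : G n ≠ 0 := h0 n hn (by omega)
    field_simp

lemma prod_blocks (g : ℕ → ℕ) (F : ℕ → K) (a b : ℕ) (hab : a ≤ b)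
    (hg : ∀ i, a ≤ i → i < b → g i ≤ g (i + 1)) :
    ∏ j ∈ Finset.Ico (g a) (g b), F j
      = ∏ i ∈ Finset.Ico a b, ∏ j ∈ Finset.Ico (g i) (g (i + 1)), F j := by
  induction b, hab using Nat.le_induction with
  | base => simp
  | succ n hn ih =>
    have hmono : g a ≤ g n := by
      clear ih
      induction n, hn using Nat.le_induction with
      | base => exact le_rfl
      | succ m hm ih2 => exact le_trans (ih2 (fun i h1 h2 => hg i h1 (by omega))) (hg m hm (by omega))
    rw [Finset.prod_Ico_succ_top hn, ← ih (fun i h1 h2 => hg i h1 (by omega)),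
      Finset.prod_Ico_consecutive _ hmono (hg n hn (by omega))]

lemma rowLen_eq {κ : YoungDiagram} {r m : ℕ} (h1 : (r, m) ∉ κ) (h2 : ∀ b < m, (r, b) ∈ κ) :
    κ.rowLen r = m := by
  have ha : κ.rowLen r ≤ m := by
    by_contra h
    exact h1 (YoungDiagram.mem_iff_lt_rowLen.mpr (by omega))
  rcases Nat.eq_zero_or_pos m with h | h
  · omega
  · have := YoungDiagram.mem_iff_lt_rowLen.mp (h2 (m - 1) (by omega))
    omega

lemma colLen_eq {κ : YoungDiagram} {j m : ℕ} (h1 : (m, j) ∉ κ) (h2 : ∀ a < m, (a, j) ∈ κ) :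
    κ.colLen j = m := by
  have ha : κ.colLen j ≤ m := by
    by_contra h
    exact h1 (YoungDiagram.mem_iff_lt_colLen.mpr (by omega))
  rcases Nat.eq_zero_or_pos m with h | h
  · omega
  · have := YoungDiagram.mem_iff_lt_colLen.mp (h2 (m - 1) (by omega))
    omega


/-- Explicit formula for `t^{y_s} α_{λ^{(+s)}/λ}(q,t)` in terms of the parameters of `λ`.
Here `λ` has `d` distinct nonzero part sizes; `x i = h₁+⋯+hᵢ` and `y i = v₁+⋯+vᵢ` are the
partial sums of the horizontal and vertical boundary-segment lengths, so that (0-indexed)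
rows `y (i-1), …, y i − 1` of `λ` all have length `x d − x (i−1)` for `1 ≤ i ≤ d`, and `λ` has
exactly `y d` nonempty rows. `λ^{(+s)}` is obtained from `λ` by adding one cell at the end of
row `y s` (0-indexed). -/
theorem t_alpha_explicit_formula (l : YoungDiagram) (d : ℕ) (x y : ℕ → ℕ)
    (hx0 : x 0 = 0) (hy0 : y 0 = 0)
    (hxmono : ∀ i < d, x i < x (i + 1)) (hymono : ∀ i < d, y i < y (i + 1))
    (hrows : l.colLen 0 = y d)
    (hlen : ∀ i ∈ Finset.Icc 1 d, ∀ r, y (i - 1) ≤ r → r < y i → l.rowLen r = x d - x (i - 1))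
    (s : ℕ) (hs : s ≤ d)
    (ν : YoungDiagram) (hν : ν.cells = insert (y s, l.rowLen (y s)) l.cells) :
    t ^ (y s) * alph l ν
      = (∏ i ∈ Finset.Icc 1 d, (q ^ x s * t ^ y s - q ^ x (i - 1) * t ^ y i))
        / ∏ i ∈ (Finset.range (d + 1)).erase s, (q ^ x s * t ^ y s - q ^ x i * t ^ y i) := by
  have hxm : ∀ i j, i < j → j ≤ d → x i < x j := smono hxmono
  have hym : ∀ i j, i < j → j ≤ d → y i < y j := smono hymono
  have hxle : ∀ i j, i ≤ j → j ≤ d → x i ≤ x j := by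
    intro i j h h'; rcases eq_or_lt_of_le h with rfl | h'' ; · rfl
    exact le_of_lt (hxm i j h'' h')
  have hyle : ∀ i j, i ≤ j → j ≤ d → y i ≤ y j := by
    intro i j h h'; rcases eq_or_lt_of_le h with rfl | h'' ; · rfl
    exact le_of_lt (hym i j h'' h')
  -- rows beyond y d are empty
  have hrow0 : ∀ r, y d ≤ r → l.rowLen r = 0 := by
    intro r hr
    apply rowLen_eq
    · rw [YoungDiagram.mem_iff_lt_colLen, hrows]; omega
    · omega
  -- block row lengths
  have hrowblk : ∀ i, i < d → ∀ r, y i ≤ r → r < y (i + 1) → l.rowLen r = x d - x i := by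
    intro i hi r h1 h2
    have := hlen (i + 1) (Finset.mem_Icc.mpr (by omega)) r (by simpa using h1) h2
    simpa using this
  have hract : ∀ k, k ≤ d → l.rowLen (y k) = x d - x k := by
    intro k hk
    rcases eq_or_lt_of_le hk with rfl | hk'
    · rw [hrow0 (y k) le_rfl]; omega
    · exact hrowblk k hk' (y k) le_rfl (hym k (k + 1) (by omega) (by omega))
  -- block existence
  have hblkex : ∀ r, r < y d → ∃ i, i < d ∧ y i ≤ r ∧ r < y (i + 1) := by
    intro r hr
    have hd : 0 < d := by
      by_contra h
      have : d = 0 := by omega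
      rw [this, hy0] at hr; omega
    obtain ⟨e, rfl⟩ : ∃ e, d = e + 1 := ⟨d - 1, by omega⟩
    have hP : ∃ i, r < y (i + 1) := ⟨e, hr⟩
    refine ⟨Nat.find hP, ?_, ?_, Nat.find_spec hP⟩
    · have : Nat.find hP ≤ e := Nat.find_le hr
      omega
    · rcases Nat.eq_zero_or_pos (Nat.find hP) with h | h
      · rw [h, hy0]; omega
      · have := Nat.find_min hP (m := Nat.find hP - 1) (by omega)
        have he : Nat.find hP - 1 + 1 = Nat.find hP := by omega
        rw [he] at this; omega
  have hrowle : ∀ r, l.rowLen r ≤ x d := by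
    intro r
    rcases lt_or_ge r (y d) with h | h
    · obtain ⟨i, hi, h1, h2⟩ := hblkex r h
      rw [hrowblk i hi r h1 h2]; omega
    · rw [hrow0 r h]; omega
  -- column lengths
  have hcol0 : ∀ j, x d ≤ j → l.colLen j = 0 := by
    intro j hj
    apply colLen_eq
    · rw [YoungDiagram.mem_iff_lt_rowLen]
      have := hrowle 0; omega
    · omega
  have hcolblk : ∀ i, i < d → ∀ j, x d - x (i + 1) ≤ j → j < x d - x i → l.colLen j = y (i + 1) := by
    intro i hi j hj1 hj2
    apply colLen_eq
    · rw [YoungDiagram.mem_iff_lt_rowLen, hract (i + 1) (by omega)]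
      omega
    · intro a ha
      rw [YoungDiagram.mem_iff_lt_rowLen]
      have had : a < y d := lt_of_lt_of_le ha (hyle (i + 1) d (by omega) le_rfl)
      obtain ⟨k, hk, h1, h2⟩ := hblkex a had
      rw [hrowblk k hk a h1 h2]
      have hki : k ≤ i := by
        by_contra h
        have : y (i + 1) ≤ y k := hyle (i + 1) k (by omega) (by omega)
        omega
      have : x k ≤ x i := hxle k i hki (by omega)
      omega
  have hcolLs : l.colLen (x d - x s) = y s := by
    rcases Nat.eq_zero_or_pos s with rfl | hspos
    · rw [hy0, hx0, Nat.sub_zero]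
      exact hcol0 (x d) le_rfl
    · have he : s - 1 + 1 = s := by omega
      have := hcolblk (s - 1) (by omega) (x d - x s)
      rw [he] at this
      refine this le_rfl ?_
      have h1 : x (s - 1) < x s := hxm (s - 1) s (by omega) hs
      have h2 : x s ≤ x d := hxle s d hs le_rfl
      omega
  set Ls := x d - x s with hLsdef
  have hLs : l.rowLen (y s) = Ls := hract s hs
  rw [hLs] at hν
  -- membership in ν
  have memν : ∀ a b, (a, b) ∈ ν ↔ (a, b) ∈ l ∨ (a = y s ∧ b = Ls) := by
    intro a b
    rw [← YoungDiagram.mem_cells, hν, Finset.mem_insert, YoungDiagram.mem_cells, Prod.ext_iff]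
    tauto
  have hνrow_s : ν.rowLen (y s) = Ls + 1 := by
    apply rowLen_eq
    · rw [memν]
      push_neg
      constructor
      · rw [YoungDiagram.mem_iff_lt_rowLen, hLs]; omega
      · intro _; omega
    · intro b hb
      rw [memν]
      rcases lt_or_ge b Ls with h | h
      · left; rw [YoungDiagram.mem_iff_lt_rowLen, hLs]; omega
      · right; omega
  have hνrow : ∀ r, r ≠ y s → ν.rowLen r = l.rowLen r := by
    intro r hr
    apply rowLen_eq
    · rw [memν]
      push_neg
      constructor
      · rw [YoungDiagram.mem_iff_lt_rowLen]; omega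
      · intro h; exact absurd h hr
    · intro b hb
      rw [memν]
      left; rw [YoungDiagram.mem_iff_lt_rowLen]; omega
  have hνcol_Ls : ν.colLen Ls = y s + 1 := by
    apply colLen_eq
    · rw [memν]
      push_neg
      constructor
      · rw [YoungDiagram.mem_iff_lt_colLen, hcolLs]; omega
      · intro h; omega
    · intro a ha
      rw [memν]
      rcases lt_or_ge a (y s) with h | h
      · left; rw [YoungDiagram.mem_iff_lt_colLen, hcolLs]; omega
      · right; omega
  have hνcol : ∀ j, j ≠ Ls → ν.colLen j = l.colLen j := by
    intro j hj
    apply colLen_eq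
    · rw [memν]
      push_neg
      constructor
      · rw [YoungDiagram.mem_iff_lt_colLen]; omega
      · intro _; exact hj
    · intro a ha
      rw [memν]
      left; rw [YoungDiagram.mem_iff_lt_colLen]; omega
  -- identify Rset and Cset
  have hnotin : (y s, Ls) ∉ l.cells := by
    rw [YoungDiagram.mem_cells, YoungDiagram.mem_iff_lt_rowLen, hLs]; omega
  have hdiff : ν.cells \ l.cells = {(y s, Ls)} := by
    rw [hν]
    ext c
    simp only [Finset.mem_sdiff, Finset.mem_insert, Finset.mem_singleton]
    constructor
    · rintro ⟨h | h, hn⟩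
      · exact h
      · exact absurd h hn
    · rintro rfl
      exact ⟨Or.inl rfl, hnotin⟩
  have hR : Rset l ν = (Finset.range Ls).image fun j => (y s, j) := by
    ext c
    obtain ⟨a, b⟩ := c
    simp only [Rset, Finset.mem_filter, hdiff, Finset.mem_singleton, Finset.mem_image,
      Finset.mem_range, YoungDiagram.mem_cells, Prod.ext_iff]
    constructor
    · rintro ⟨hmem, dd, ⟨h1, h2⟩, h3⟩
      rw [YoungDiagram.mem_iff_lt_rowLen] at hmem
      have ha : a = y s := by rw [h3, h1]
      subst ha
      rw [hLs] at hmem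
      exact ⟨b, hmem, rfl, rfl⟩
    · rintro ⟨j, hj, h1, h2⟩
      subst h2
      have ha : a = y s := h1.symm
      subst ha
      refine ⟨?_, (y s, Ls), ⟨rfl, rfl⟩, rfl⟩
      rw [YoungDiagram.mem_iff_lt_rowLen, hLs]; omega
  have hC : Cset l ν = (Finset.range (y s)).image fun r => (r, Ls) := by
    ext c
    obtain ⟨a, b⟩ := c
    simp only [Cset, Finset.mem_filter, hdiff, Finset.mem_singleton, Finset.mem_image,
      Finset.mem_range, YoungDiagram.mem_cells, Prod.ext_iff]
    constructor
    · rintro ⟨hmem, dd, ⟨h1, h2⟩, h3⟩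
      rw [YoungDiagram.mem_iff_lt_colLen] at hmem
      have hb : b = Ls := by rw [h3, h2]
      subst hb
      rw [hcolLs] at hmem
      exact ⟨a, hmem, rfl, rfl⟩
    · rintro ⟨r, hr, h1, h2⟩
      subst h1
      have hb : b = Ls := h2.symm
      subst hb
      refine ⟨?_, (y s, Ls), ⟨rfl, rfl⟩, rfl⟩
      rw [YoungDiagram.mem_iff_lt_colLen, hcolLs]; omega
  -- alph as two range products
  have halph : alph l ν
      = (∏ j ∈ Finset.range Ls,
          brk (arm l (y s, j)) (leg l (y s, j) + 1) / brk (arm ν (y s, j)) (leg ν (y s, j) + 1))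
      * (∏ r ∈ Finset.range (y s),
          brk (arm l (r, Ls) + 1) (leg l (r, Ls)) / brk (arm ν (r, Ls) + 1) (leg ν (r, Ls))) := by
    rw [alph, hR, hC, Finset.prod_image (fun a _ b _ h => by simpa using h),
      Finset.prod_image (fun a _ b _ h => by simpa using h)]
  set n := d - s with hndef
  -- Rset product
  have hRval : (∏ j ∈ Finset.range Ls,
      brk (arm l (y s, j)) (leg l (y s, j) + 1) / brk (arm ν (y s, j)) (leg ν (y s, j) + 1))
      = ∏ k ∈ Finset.range n,
          brk (x (s + k) - x s) (y (s + k + 1) - y s)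
            / brk (x (s + k + 1) - x s) (y (s + k + 1) - y s) := by
    have hIco : Finset.range Ls = Finset.Ico (x d - x (d - 0)) (x d - x (d - n)) := by
      rw [Finset.range_eq_Ico]
      congr 1
      · simp
      · rw [show d - n = s from by omega]
    rw [hIco, prod_blocks (fun i => x d - x (d - i)) _ 0 n (by omega) (by
      intro i _ hi
      have h1 : x (d - (i + 1)) ≤ x (d - i) := hxle _ _ (by omega) (by omega)
      omega)]
    rw [← Finset.range_eq_Ico]
    have hblockR : ∀ i ∈ Finset.range n,
        (∏ j ∈ Finset.Ico (x d - x (d - i)) (x d - x (d - (i + 1))),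
          brk (arm l (y s, j)) (leg l (y s, j) + 1) / brk (arm ν (y s, j)) (leg ν (y s, j) + 1))
        = brk (x (d - i - 1) - x s) (y (d - i) - y s)
            / brk (x (d - i) - x s) (y (d - i) - y s) := by
      intro i hi
      rw [Finset.mem_range] at hi
      have hdi1 : d - (i + 1) = d - i - 1 := by omega
      have exd : x (d - (i + 1)) = x (d - i - 1) := by rw [hdi1]
      have hx1 : x s ≤ x (d - i - 1) := hxle _ _ (by omega) (by omega)
      have hx2 : x (d - i - 1) ≤ x (d - i) := hxle _ _ (by omega) (by omega)
      have hx3 : x (d - i) ≤ x d := hxle _ _ (by omega) le_rfl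
      have hys : y s < y (d - i) := hym s (d - i) (by omega) (by omega)
      have hm : y (d - i) - y s ≠ 0 := by omega
      have hkey : ∀ j ∈ Finset.Ico (x d - x (d - i)) (x d - x (d - (i + 1))),
          brk (arm l (y s, j)) (leg l (y s, j) + 1) / brk (arm ν (y s, j)) (leg ν (y s, j) + 1)
          = brk (Ls - (j + 1)) (y (d - i) - y s) / brk (Ls - j) (y (d - i) - y s) := by
        intro j hj
        rw [Finset.mem_Ico, exd] at hj
        obtain ⟨hj1, hj2⟩ := hj
        have hjLs : j < Ls := by omega
        have hcb := hcolblk (d - i - 1) (by omega) j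
        rw [show d - i - 1 + 1 = d - i from by omega] at hcb
        have hcolj : l.colLen j = y (d - i) := hcb (by omega) (by omega)
        have e1 : arm l (y s, j) = Ls - (j + 1) := by
          simp only [arm]
          rw [hLs]
          omega
        have e2 : leg l (y s, j) + 1 = y (d - i) - y s := by
          simp only [leg]
          rw [hcolj]
          omega
        have e3 : arm ν (y s, j) = Ls - j := by
          simp only [arm]
          rw [hνrow_s]
          omega
        have e4 : leg ν (y s, j) + 1 = y (d - i) - y s := by
          simp only [leg]
          rw [hνcol j (by omega), hcolj]
          omega
        rw [e1, e2, e3, e4]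
      rw [Finset.prod_congr rfl hkey,
        prod_telescope (fun j => brk (Ls - j) (y (d - i) - y s)) _ _ (by omega)
          (fun j _ _ => brk_ne_zero (Or.inr hm))]
      rw [show Ls - (x d - x (d - (i + 1))) = x (d - i - 1) - x s from by rw [exd]; omega,
        show Ls - (x d - x (d - i)) = x (d - i) - x s from by omega]
    rw [Finset.prod_congr rfl hblockR]
    rw [← Finset.prod_range_reflect (fun k => brk (x (s + k) - x s) (y (s + k + 1) - y s)
      / brk (x (s + k + 1) - x s) (y (s + k + 1) - y s)) n]
    apply Finset.prod_congr rfl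
    intro i hi
    rw [Finset.mem_range] at hi
    rw [show s + (n - 1 - i) = d - i - 1 from by omega,
      show d - i - 1 + 1 = d - i from by omega]
  -- Cset product
  have hCval : (∏ r ∈ Finset.range (y s),
      brk (arm l (r, Ls) + 1) (leg l (r, Ls)) / brk (arm ν (r, Ls) + 1) (leg ν (r, Ls)))
      = ∏ i ∈ Finset.range s,
          brk (x s - x i) (y s - y (i + 1)) / brk (x s - x i) (y s - y i) := by
    have hIco : Finset.range (y s) = Finset.Ico (y 0) (y s) := by
      rw [Finset.range_eq_Ico, hy0]
    rw [hIco, prod_blocks y _ 0 s (by omega) (fun i _ hi => hyle i (i + 1) (by omega) (by omega)),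
      ← Finset.range_eq_Ico]
    apply Finset.prod_congr rfl
    intro i hi
    rw [Finset.mem_range] at hi
    have hxi : x i < x s := hxm i s (by omega) hs
    have hxs : x s ≤ x d := hxle s d hs le_rfl
    have hyi1 : y (i + 1) ≤ y s := hyle (i + 1) s (by omega) hs
    have hkey : ∀ r ∈ Finset.Ico (y i) (y (i + 1)),
        brk (arm l (r, Ls) + 1) (leg l (r, Ls)) / brk (arm ν (r, Ls) + 1) (leg ν (r, Ls))
        = brk (x s - x i) (y s - (r + 1)) / brk (x s - x i) (y s - r) := by
      intro r hr
      rw [Finset.mem_Ico] at hr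
      obtain ⟨hr1, hr2⟩ := hr
      have hrys : r < y s := by omega
      have hrowr : l.rowLen r = x d - x i := hrowblk i (by omega) r hr1 hr2
      have e1 : arm l (r, Ls) + 1 = x s - x i := by
        simp only [arm]
        rw [hrowr]
        omega
      have e2 : leg l (r, Ls) = y s - (r + 1) := by
        simp only [leg]
        rw [hcolLs]
        omega
      have e3 : arm ν (r, Ls) + 1 = x s - x i := by
        simp only [arm]
        rw [hνrow r (by omega), hrowr]
        omega
      have e4 : leg ν (r, Ls) = y s - r := by
        simp only [leg]
        rw [hνcol_Ls]
        omega
      rw [e1, e2, e3, e4]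
    rw [Finset.prod_congr rfl hkey,
      prod_telescope (fun r => brk (x s - x i) (y s - r)) _ _
        (hyle i (i + 1) (by omega) (by omega))
        (fun r _ _ => brk_ne_zero (Or.inl (by omega)))]
  -- numerator of RHS
  have hNum : (∏ i ∈ Finset.Icc 1 d, (q ^ x s * t ^ y s - q ^ x (i - 1) * t ^ y i))
      = ((∏ k ∈ Finset.range s, -(q ^ x k * t ^ y (k + 1)))
          * ∏ k ∈ Finset.range s, brk (x s - x k) (y s - y (k + 1)))
        * ((q ^ x s * t ^ y s) ^ n
          * ∏ k ∈ Finset.range n, brk (x (s + k) - x s) (y (s + k + 1) - y s)) := by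
    rw [← Finset.Ico_add_one_right_eq_Icc, Finset.prod_Ico_eq_prod_range]
    simp only [Nat.add_sub_cancel, Nat.add_sub_cancel_left, Nat.succ_sub_one]
    have hidx : ∀ k : ℕ, 1 + k = k + 1 := fun k => by omega
    simp only [hidx]
    have hsplit2 := Finset.prod_range_add
      (fun k => (q ^ x s * t ^ y s - q ^ x k * t ^ y (k + 1) : K)) s n
    rw [show s + n = d from by omega] at hsplit2
    rw [hsplit2]
    congr 1
    · rw [← Finset.prod_mul_distrib]
      apply Finset.prod_congr rfl
      intro k hk
      rw [Finset.mem_range] at hk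
      have hxk : x k ≤ x s := hxle k s (by omega) hs
      have hyk : y (k + 1) ≤ y s := hyle (k + 1) s (by omega) hs
      have key : (-(q ^ x k * t ^ y (k + 1))) * brk (x s - x k) (y s - y (k + 1))
          = (q ^ x k * q ^ (x s - x k)) * (t ^ y (k + 1) * t ^ (y s - y (k + 1)))
            - q ^ x k * t ^ y (k + 1) := by
        rw [brk]; ring
      rw [key, ← pow_add, ← pow_add, show x k + (x s - x k) = x s from by omega,
        show y (k + 1) + (y s - y (k + 1)) = y s from by omega]
    · have htmp : ∏ k ∈ Finset.range n,
          ((q ^ x s * t ^ y s) * brk (x (s + k) - x s) (y (s + k + 1) - y s))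
          = (q ^ x s * t ^ y s) ^ n
            * ∏ k ∈ Finset.range n, brk (x (s + k) - x s) (y (s + k + 1) - y s) := by
        rw [Finset.prod_mul_distrib, Finset.prod_const, Finset.card_range]
      rw [← htmp]
      apply Finset.prod_congr rfl
      intro k hk
      rw [Finset.mem_range] at hk
      have hxk : x s ≤ x (s + k) := hxle s (s + k) (by omega) (by omega)
      have hyk : y s ≤ y (s + k + 1) := hyle s (s + k + 1) (by omega) (by omega)
      have key : (q ^ x s * t ^ y s) * brk (x (s + k) - x s) (y (s + k + 1) - y s)
          = q ^ x s * t ^ y s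
            - (q ^ x s * q ^ (x (s + k) - x s)) * (t ^ y s * t ^ (y (s + k + 1) - y s)) := by
        rw [brk]; ring
      rw [key, ← pow_add, ← pow_add, show x s + (x (s + k) - x s) = x (s + k) from by omega,
        show y s + (y (s + k + 1) - y s) = y (s + k + 1) from by omega]
  -- denominator of RHS
  have hDen : (∏ i ∈ (Finset.range (d + 1)).erase s, (q ^ x s * t ^ y s - q ^ x i * t ^ y i))
      = ((∏ i ∈ Finset.range s, -(q ^ x i * t ^ y i))
          * ∏ i ∈ Finset.range s, brk (x s - x i) (y s - y i))
        * ((q ^ x s * t ^ y s) ^ n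
          * ∏ k ∈ Finset.range n, brk (x (s + k + 1) - x s) (y (s + k + 1) - y s)) := by
    have hsplit : (Finset.range (d + 1)).erase s
        = Finset.range s ∪ Finset.Ico (s + 1) (d + 1) := by
      ext i
      simp only [Finset.mem_erase, Finset.mem_union, Finset.mem_range, Finset.mem_Ico]
      omega
    have hdisj : Disjoint (Finset.range s) (Finset.Ico (s + 1) (d + 1)) := by
      rw [Finset.disjoint_left]
      intro a ha hb
      rw [Finset.mem_range] at ha
      rw [Finset.mem_Ico] at hb
      omega
    rw [hsplit, Finset.prod_union hdisj, Finset.prod_Ico_eq_prod_range,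
      show d + 1 - (s + 1) = n from by omega]
    congr 1
    · rw [← Finset.prod_mul_distrib]
      apply Finset.prod_congr rfl
      intro i hi
      rw [Finset.mem_range] at hi
      have hxk : x i ≤ x s := hxle i s (by omega) hs
      have hyk : y i ≤ y s := hyle i s (by omega) hs
      have key : (-(q ^ x i * t ^ y i)) * brk (x s - x i) (y s - y i)
          = (q ^ x i * q ^ (x s - x i)) * (t ^ y i * t ^ (y s - y i)) - q ^ x i * t ^ y i := by
        rw [brk]; ring
      rw [key, ← pow_add, ← pow_add, show x i + (x s - x i) = x s from by omega,
        show y i + (y s - y i) = y s from by omega]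
    · have htmp : ∏ k ∈ Finset.range n,
          ((q ^ x s * t ^ y s) * brk (x (s + k + 1) - x s) (y (s + k + 1) - y s))
          = (q ^ x s * t ^ y s) ^ n
            * ∏ k ∈ Finset.range n, brk (x (s + k + 1) - x s) (y (s + k + 1) - y s) := by
        rw [Finset.prod_mul_distrib, Finset.prod_const, Finset.card_range]
      rw [← htmp]
      apply Finset.prod_congr rfl
      intro k hk
      rw [Finset.mem_range] at hk
      rw [show s + 1 + k = s + k + 1 from by omega]
      have hxk : x s ≤ x (s + k + 1) := hxle s (s + k + 1) (by omega) (by omega)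
      have hyk : y s ≤ y (s + k + 1) := hyle s (s + k + 1) (by omega) (by omega)
      have key : (q ^ x s * t ^ y s) * brk (x (s + k + 1) - x s) (y (s + k + 1) - y s)
          = q ^ x s * t ^ y s
            - (q ^ x s * q ^ (x (s + k + 1) - x s)) * (t ^ y s * t ^ (y (s + k + 1) - y s)) := by
        rw [brk]; ring
      rw [key, ← pow_add, ← pow_add, show x s + (x (s + k + 1) - x s) = x (s + k + 1) from by omega,
        show y s + (y (s + k + 1) - y s) = y (s + k + 1) from by omega]
  -- relation between the two sign/monomial products
  have hM : (∏ k ∈ Finset.range s, -(q ^ x k * t ^ y (k + 1)))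
      = t ^ y s * ∏ i ∈ Finset.range s, -(q ^ x i * t ^ y i) := by
    have hpoint : ∀ k ∈ Finset.range s, -(q ^ x k * t ^ y (k + 1))
        = t ^ (y (k + 1) - y k) * -(q ^ x k * t ^ y k) := by
      intro k hk
      rw [Finset.mem_range] at hk
      have hyk : y k ≤ y (k + 1) := hyle k (k + 1) (by omega) (by omega)
      have key : t ^ (y (k + 1) - y k) * -(q ^ x k * t ^ y k)
          = -(q ^ x k * (t ^ y k * t ^ (y (k + 1) - y k))) := by ring
      rw [key, ← pow_add, show y k + (y (k + 1) - y k) = y (k + 1) from by omega]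
    rw [Finset.prod_congr rfl hpoint, Finset.prod_mul_distrib]
    congr 1
    rw [Finset.prod_pow_eq_pow_sum]
    congr 1
    have hsum : ∀ m, m ≤ s → ∑ k ∈ Finset.range m, (y (k + 1) - y k) = y m := by
      intro m hm
      induction m with
      | zero => simp [hy0]
      | succ p ih =>
        rw [Finset.sum_range_succ, ih (by omega)]
        have := hyle p (p + 1) (by omega) (by omega)
        omega
    exact hsum s le_rfl
  -- nonvanishing
  have hQn : (q : K) ^ x s * t ^ y s ≠ 0 := qt_pow_ne_zero _ _
  have hM2 : (∏ i ∈ Finset.range s, -(q ^ x i * t ^ y i)) ≠ 0 :=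
    Finset.prod_ne_zero_iff.mpr fun i _ => neg_ne_zero.mpr (qt_pow_ne_zero _ _)
  have hP4 : (∏ i ∈ Finset.range s, brk (x s - x i) (y s - y i)) ≠ 0 := by
    apply Finset.prod_ne_zero_iff.mpr
    intro i hi
    rw [Finset.mem_range] at hi
    have := hxm i s (by omega) hs
    exact brk_ne_zero (Or.inl (by omega))
  have hP2 : (∏ k ∈ Finset.range n, brk (x (s + k + 1) - x s) (y (s + k + 1) - y s)) ≠ 0 := by
    apply Finset.prod_ne_zero_iff.mpr
    intro k hk
    rw [Finset.mem_range] at hk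
    have := hxm s (s + k + 1) (by omega) (by omega)
    exact brk_ne_zero (Or.inl (by omega))
  -- put everything together
  rw [halph, hRval, hCval, hNum, hDen, hM, Finset.prod_div_distrib, Finset.prod_div_distrib]
  have hQpow : ((q : K) ^ x s * t ^ y s) ^ n ≠ 0 := pow_ne_zero _ hQn
  have hq0 : (q : K) ≠ 0 := by simpa using qt_pow_ne_zero 1 0
  have ht0 : (t : K) ≠ 0 := by simpa using qt_pow_ne_zero 0 1
  field_simp

end
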